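/- Let f be a sigmoidal efficiency function: f : [0,∞) → [0,1) is continuously differentiable, f(0) = 0, f′(γ) > 0 for all γ > 0, f(γ) → 1 as γ → ∞, and there exists a > 0 such that f″ > 0 on (0,a) and f″ < 0 on (a,∞). Then the equation f(γ) = γ f′(γ) has a unique positive solution γ*. Moreover, γ f′(γ) > f(γ) for all 0 < γ < γ*, and γ f′(γ) < f(γ) for all γ > γ*. -/

import Mathlib

/-- For a sigmoidal efficiency function `f` (continuously differentiable
with derivative `f'` and second derivative `f''`, `f 0 = 0`, `f' > 0` on `(0,∞)`,
values in `[0,1)`, `f → 1` at `∞`, convex on `(0,a)` and concave on `(a,∞)` for some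
`a > 0`), the equation `f γ = γ * f' γ` has a unique positive solution `γ*`; moreover
`γ f'(γ) > f(γ)` for `0 < γ < γ*` and `γ f'(γ) < f(γ)` for `γ > γ*`. -/
theorem sigmoidal_unique_utility_maximizing_SIR (f f' f'' : ℝ → ℝ)
    (hcontf : ContinuousOn f (Set.Ici 0))
    (hderiv : ∀ x : ℝ, 0 < x → HasDerivAt f (f' x) x)
    (hcontf' : ContinuousOn f' (Set.Ioi 0))
    (hderiv2 : ∀ x : ℝ, 0 < x → HasDerivAt f' (f'' x) x)
    (hf0 : f 0 = 0)
    (hf'pos : ∀ x : ℝ, 0 < x → 0 < f' x)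
    (hrange : ∀ x : ℝ, 0 ≤ x → 0 ≤ f x ∧ f x < 1)
    (hlim : Filter.Tendsto f Filter.atTop (nhds 1))
    (a : ℝ) (ha : 0 < a)
    (hconvex : ∀ x : ℝ, 0 < x → x < a → 0 < f'' x)
    (hconcave : ∀ x : ℝ, a < x → f'' x < 0) :
    ∃ g : ℝ, 0 < g ∧ f g = g * f' g ∧
      (∀ g' : ℝ, 0 < g' → f g' = g' * f' g' → g' = g) ∧
      (∀ γ : ℝ, 0 < γ → γ < g → f γ < γ * f' γ) ∧
      (∀ γ : ℝ, g < γ → γ * f' γ < f γ) := by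
  set F : ℝ → ℝ := fun x => x * f' x - f x with hF
  -- derivative of F
  have hFderiv : ∀ x : ℝ, 0 < x → HasDerivAt F (x * f'' x) x := by
    intro x hx
    have h := ((hasDerivAt_id x).mul (hderiv2 x hx)).sub (hderiv x hx)
    convert h using 1
    · rfl
    · rfl
    · rfl
    · simp [id_eq]
  -- f is strictly monotone on Ici 0
  have hfmono : StrictMonoOn f (Set.Ici 0) := by
    apply strictMonoOn_of_deriv_pos (convex_Ici 0) hcontf
    intro x hx
    rw [interior_Ici] at hx
    rw [(hderiv x hx).deriv]
    exact hf'pos x hx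
  have hfa : 0 < f a := by
    have := hfmono (Set.self_mem_Ici) (Set.mem_Ici.mpr ha.le) ha
    rwa [hf0] at this
  -- f' strictly monotone on Ioc 0 a
  have hf'mono : StrictMonoOn f' (Set.Ioc 0 a) := by
    apply strictMonoOn_of_deriv_pos (convex_Ioc 0 a)
      (hcontf'.mono (fun x hx => hx.1))
    intro x hx
    rw [interior_Ioc] at hx
    rw [(hderiv2 x hx.1).deriv]
    exact hconvex x hx.1 hx.2
  -- F > 0 on Ioc 0 a
  have hFpos : ∀ x : ℝ, 0 < x → x ≤ a → 0 < F x := by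
    intro x hx hxa
    obtain ⟨c, hc, hceq⟩ := exists_hasDerivAt_eq_slope f f' hx
      (hcontf.mono (fun y hy => hy.1))
      (fun y hy => hderiv y hy.1)
    have hfx : f x = x * f' c := by
      rw [hf0, sub_zero, sub_zero, eq_div_iff hx.ne'] at hceq
      linarith [hceq]
    have hc' : f' c < f' x :=
      hf'mono ⟨hc.1, le_trans hc.2.le hxa⟩ ⟨hx, hxa⟩ hc.2
    have : 0 < x * (f' x - f' c) := mul_pos hx (by linarith)
    simp only [hF, hfx]
    nlinarith
  -- F strictly decreasing on Ici a
  have hFanti : StrictAntiOn F (Set.Ici a) := by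
    apply strictAntiOn_of_deriv_neg (convex_Ici a)
    · exact (continuousOn_id.mul (hcontf'.mono (fun x hx => lt_of_lt_of_le ha hx))).sub
        (hcontf.mono (fun x hx => le_trans ha.le hx))
    · intro x hx
      rw [interior_Ici] at hx
      rw [(hFderiv x (lt_trans ha hx)).deriv]
      exact mul_neg_of_pos_of_neg (lt_trans ha hx) (hconcave x hx)
  -- there exists b > a with F b < 0
  have hFneg : ∃ b : ℝ, a < b ∧ F b < 0 := by
    by_contra hcon
    push_neg at hcon
    set c := f a with hc
    -- h = f - c * log is monotone on Ici a
    have hmono : MonotoneOn (fun x => f x - c * Real.log x) (Set.Ici a) := by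
      apply monotoneOn_of_deriv_nonneg (convex_Ici a)
      · exact (hcontf.mono (fun x hx => le_trans ha.le hx)).sub
          (continuousOn_const.mul
            (Real.continuousOn_log.mono (fun x hx => ne_of_gt (lt_of_lt_of_le ha hx))))
      · intro x hx
        rw [interior_Ici] at hx
        have hx0 : (0:ℝ) < x := lt_trans ha hx
        exact ((hderiv x hx0).sub
          ((Real.hasDerivAt_log (ne_of_gt hx0)).const_mul c)).differentiableAt.differentiableWithinAt
      · intro x hx
        rw [interior_Ici] at hx
        have hx0 : (0:ℝ) < x := lt_trans ha hx
        rw [HasDerivAt.deriv (f := fun x => f x - c * Real.log x) ((hderiv x hx0).sub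
          ((Real.hasDerivAt_log (ne_of_gt hx0)).const_mul c))]
        have hFx : 0 ≤ F x := hcon x hx
        have hfx : c ≤ f x := (hfmono (Set.mem_Ici.mpr ha.le)
          (Set.mem_Ici.mpr hx0.le) hx).le
        have : f x ≤ x * f' x := by simpa [hF, sub_nonneg] using hFx
        have h1 : c / x ≤ f' x := by
          rw [div_le_iff₀ hx0]
          nlinarith
        have : c * x⁻¹ ≤ f' x := by rw [mul_comm, ← div_eq_inv_mul]; exact h1
        linarith
    -- evaluate at b = a * exp (1/c)
    set b := a * Real.exp (1 / c) with hb
    have hexp : (1:ℝ) < Real.exp (1 / c) := by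
      rw [Real.one_lt_exp_iff]
      positivity
    have hab : a < b := by
      have := mul_lt_mul_of_pos_left hexp ha
      simpa [hb] using this
    have hlogb : Real.log b = Real.log a + 1 / c := by
      rw [hb, Real.log_mul (ne_of_gt ha) (ne_of_gt (Real.exp_pos _)), Real.log_exp]
    have hle := hmono (Set.mem_Ici.mpr le_rfl) (Set.mem_Ici.mpr hab.le)
    have h2 : f a - c * Real.log a ≤ f b - c * Real.log b := by
      simpa using hle hab.le
    rw [hlogb] at h2
    have hfb : f b < 1 := (hrange b (le_trans ha.le hab.le)).2
    have : c * (1 / c) = 1 := by field_simp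
    nlinarith
  obtain ⟨b, hab, hFb⟩ := hFneg
  have hFa : 0 < F a := hFpos a ha le_rfl
  -- IVT on [a,b]
  have hFcont : ContinuousOn F (Set.Icc a b) := by
    apply ContinuousOn.sub
    · exact continuousOn_id.mul (hcontf'.mono (fun x hx => lt_of_lt_of_le ha hx.1))
    · exact hcontf.mono (fun x hx => le_trans ha.le hx.1)
  have hmem : (0:ℝ) ∈ Set.Icc (F b) (F a) := ⟨hFb.le, hFa.le⟩
  obtain ⟨g, hg, hFg⟩ := intermediate_value_Icc' hab.le hFcont hmem
  have hga : a < g := by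
    rcases eq_or_lt_of_le hg.1 with h | h
    · exfalso; rw [← h] at hFg; linarith
    · exact h
  have hg0 : 0 < g := lt_trans ha hga
  have hFg0 : F g = 0 := hFg
  -- sign facts
  have hsign1 : ∀ γ : ℝ, 0 < γ → γ < g → f γ < γ * f' γ := by
    intro γ hγ hγg
    rcases le_or_gt γ a with h | h
    · have := hFpos γ hγ h
      simp only [hF] at this; linarith
    · have := hFanti (Set.mem_Ici.mpr h.le) (Set.mem_Ici.mpr hga.le) hγg
      rw [hFg0] at this
      simp only [hF] at this; linarith
  have hsign2 : ∀ γ : ℝ, g < γ → γ * f' γ < f γ := by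
    intro γ hγ
    have := hFanti (Set.mem_Ici.mpr hga.le) (Set.mem_Ici.mpr (le_trans hga.le hγ.le)) hγ
    rw [hFg0] at this
    simp only [hF] at this; linarith
  refine ⟨g, hg0, ?_, ?_, hsign1, hsign2⟩
  · simp only [hF] at hFg0; linarith
  · intro g' hg' heq
    by_contra hne
    rcases lt_or_gt_of_ne hne with h | h
    · have := hsign1 g' hg' h; linarith
    · have := hsign2 g' h; linarith
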